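/- Let q₀ ≥ ⋯ ≥ q_{n−1} be reals, m ≥ 1 with n ≥ 2m+1, and let w* satisfy q_{⌊(n+m−1)/2⌋} ≤ w* ≤ q_{⌊(n−m)/2⌋}. If all m appended values equal w*, then the median of the resulting n+m values equals w*. -/

import Mathlib

lemma sorted_getD_eq (L : List ℝ) (hL : L.Pairwise (· ≤ ·)) (w : ℝ) (k : ℕ) (hk : k < L.length)
    (ha : L.countP (fun x => decide (x < w)) ≤ k)
    (hb : L.countP (fun x => decide (w < x)) + k + 1 ≤ L.length) :
    L.getD k 0 = w := by
  rw [List.getD_eq_getElem L 0 hk]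
  by_contra hne
  rcases lt_or_gt_of_ne hne with hlt | hgt
  · -- L[k] < w : first k+1 elements all < w
    have hall : ∀ a ∈ L.take (k+1), (fun x => decide (x < w)) a = true := by
      intro a haa
      rcases List.mem_iff_getElem.1 haa with ⟨i, hi, rfl⟩
      have hi' : i < L.length := by
        have := hi; rw [List.length_take] at this; omega
      rw [List.getElem_take]
      have hik : i ≤ k := by
        have := hi; rw [List.length_take] at this; omega
      have : L.get ⟨i, hi'⟩ ≤ L.get ⟨k, hk⟩ := hL.rel_get_of_le hik
      simpa using lt_of_le_of_lt this hlt
    have h1 : (L.take (k+1)).countP (fun x => decide (x < w)) = k + 1 := by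
      rw [List.countP_eq_length.2 hall, List.length_take]; omega
    have h2 := List.Sublist.countP_le (p := fun x => decide (x < w)) (List.take_sublist (k+1) L)
    omega
  · -- L[k] > w : last L.length - k elements all > w
    have hall : ∀ a ∈ L.drop k, (fun x => decide (w < x)) a = true := by
      intro a haa
      rcases List.mem_iff_getElem.1 haa with ⟨i, hi, rfl⟩
      rw [List.getElem_drop]
      have hi' : k + i < L.length := by
        have := hi; rw [List.length_drop] at this; omega
      have : L.get ⟨k, hk⟩ ≤ L.get ⟨k + i, hi'⟩ := hL.rel_get_of_le (by simp)
      simpa using lt_of_lt_of_le hgt this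
    have h1 : (L.drop k).countP (fun x => decide (w < x)) = L.length - k := by
      rw [List.countP_eq_length.2 hall, List.length_drop]
    have h2 := List.Sublist.countP_le (p := fun x => decide (w < x)) (List.drop_sublist k L)
    omega

lemma countP_replicate_zero (m : ℕ) (w : ℝ) (p : ℝ → Prop) [DecidablePred p] (h : ¬ p w) :
    Multiset.countP p (Multiset.replicate m w) = 0 := by
  simp [Multiset.countP_eq_card_filter, Multiset.filter_eq_nil]
  intro a ha; rw [Multiset.eq_of_mem_replicate ha]; exact h

open Finset

/-- Median of a multiset of reals: average of the two middle order statistics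
(equal to the middle one for odd cardinality). -/
noncomputable def med (s : Multiset ℝ) : ℝ :=
  ((s.sort (· ≤ ·)).getD ((Multiset.card s - 1) / 2) 0 +
    (s.sort (· ≤ ·)).getD (Multiset.card s / 2) 0) / 2

/-- `m`-trimmed mean: remove the `m` largest and `m` smallest values and average the rest. -/
noncomputable def trimmedMean (m : ℕ) (s : Multiset ℝ) : ℝ :=
  ((((s.sort (· ≤ ·)).drop m).take (Multiset.card s - 2 * m)).sum) /
    ((Multiset.card s : ℝ) - 2 * m)

/-- The multiset of the first `n` values of `q`. -/
noncomputable def qMs (n : ℕ) (q : ℕ → ℝ) : Multiset ℝ :=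
  (Finset.range n).val.map q

theorem stmt9 (n m : ℕ) (hm : 1 ≤ m) (hn : 2 * m + 1 ≤ n) (q : ℕ → ℝ)
    (hq : ∀ i j, i ≤ j → j < n → q j ≤ q i) (wstar : ℝ)
    (hw1 : q ((n + m - 1) / 2) ≤ wstar) (hw2 : wstar ≤ q ((n - m) / 2)) :
    med (qMs n q + Multiset.replicate m wstar) = wstar := by
  set s : Multiset ℝ := qMs n q + Multiset.replicate m wstar with hs
  have hcard : Multiset.card s = n + m := by
    simp [hs, qMs]
  set L : List ℝ := s.sort (· ≤ ·) with hL
  have hlen : L.length = n + m := by rw [hL, Multiset.length_sort, hcard]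
  have hsorted : L.Pairwise (· ≤ ·) := Multiset.pairwise_sort ..
  -- counts
  have hcoe : (↑L : Multiset ℝ) = s := Multiset.sort_eq _ _
  have hcountlt : L.countP (fun x => decide (x < wstar)) =
      Multiset.countP (fun x => x < wstar) s := by
    rw [← hcoe, Multiset.coe_countP]
  have hcountgt : L.countP (fun x => decide (wstar < x)) =
      Multiset.countP (fun x => wstar < x) s := by
    rw [← hcoe, Multiset.coe_countP]
  have hqcountlt : Multiset.countP (fun x => x < wstar) (qMs n q) =
      ((Finset.range n).filter (fun i => q i < wstar)).card := by
    rw [qMs, Multiset.countP_map]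
    simp [Finset.card_filter, Multiset.countP_eq_card_filter, Finset.filter]
  have hqcountgt : Multiset.countP (fun x => wstar < x) (qMs n q) =
      ((Finset.range n).filter (fun i => wstar < q i)).card := by
    rw [qMs, Multiset.countP_map]
    simp [Finset.card_filter, Multiset.countP_eq_card_filter, Finset.filter]
  -- bound a
  have ha : ((Finset.range n).filter (fun i => q i < wstar)).card ≤ n - ((n - m) / 2 + 1) := by
    have hsub : (Finset.range n).filter (fun i => q i < wstar) ⊆ Finset.Ico ((n - m) / 2 + 1) n := by
      intro i hi
      rw [Finset.mem_filter, Finset.mem_range] at hi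
      rw [Finset.mem_Ico]
      refine ⟨?_, hi.1⟩
      by_contra h
      push_neg at h
      have hle : i ≤ (n - m) / 2 := by omega
      have : q ((n - m) / 2) ≤ q i := hq i ((n - m) / 2) hle (by omega)
      have := lt_of_le_of_lt (le_trans hw2 this) hi.2
      exact lt_irrefl _ this
    calc _ ≤ (Finset.Ico ((n - m) / 2 + 1) n).card := Finset.card_le_card hsub
      _ = n - ((n - m) / 2 + 1) := by rw [Nat.card_Ico]
  -- bound b
  have hb : ((Finset.range n).filter (fun i => wstar < q i)).card ≤ (n + m - 1) / 2 := by
    have hsub : (Finset.range n).filter (fun i => wstar < q i) ⊆ Finset.range ((n + m - 1) / 2) := by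
      intro i hi
      rw [Finset.mem_filter, Finset.mem_range] at hi
      rw [Finset.mem_range]
      by_contra h
      push_neg at h
      have : q ((n + m - 1) / 2) ≤ wstar := hw1
      have h2 : q i ≤ q ((n + m - 1) / 2) := hq ((n + m - 1) / 2) i h hi.1
      have := lt_of_lt_of_le hi.2 (le_trans h2 this)
      exact lt_irrefl _ this
    calc _ ≤ (Finset.range ((n + m - 1) / 2)).card := Finset.card_le_card hsub
      _ = (n + m - 1) / 2 := by rw [Finset.card_range]
  have hreplt : Multiset.countP (fun x => x < wstar) (Multiset.replicate m wstar) = 0 :=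
    countP_replicate_zero m wstar _ (lt_irrefl wstar)
  have hrepgt : Multiset.countP (fun x => wstar < x) (Multiset.replicate m wstar) = 0 :=
    countP_replicate_zero m wstar _ (lt_irrefl wstar)
  have hca : L.countP (fun x => decide (x < wstar)) ≤ n - ((n - m) / 2 + 1) := by
    rw [hcountlt, hs, Multiset.countP_add, hqcountlt, hreplt]
    omega
  have hcb : L.countP (fun x => decide (wstar < x)) ≤ (n + m - 1) / 2 := by
    rw [hcountgt, hs, Multiset.countP_add, hqcountgt, hrepgt]
    omega
  have key : ∀ k, n - ((n - m) / 2 + 1) ≤ k → k + (n + m - 1) / 2 + 1 ≤ n + m →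
      L.getD k 0 = wstar := by
    intro k hk1 hk2
    apply sorted_getD_eq L hsorted wstar k (by omega)
    · omega
    · omega
  have h1 : L.getD ((Multiset.card s - 1) / 2) 0 = wstar := by
    apply key <;> rw [hcard] <;> omega
  have h2 : L.getD (Multiset.card s / 2) 0 = wstar := by
    apply key <;> rw [hcard] <;> omega
  rw [med, ← hL, h1, h2]
  ring
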